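/- Let n ≥ 2 and k ≥ 1 be integers and let μ¹, …, μᵏ be partitions of n, each having at least two parts (equivalently, the largest part of each μˢ is at most n−1). If the rigidity condition d_μ = 0 holds, i.e. (k−2)·n² + 2 = Σ_{s=1}^{k} Σ_i (μ_iˢ)², then k ≤ n + 1 (Goursat's bound on the number of singular points of a rigid local system of rank n on the punctured projective line). -/

import Mathlib

lemma sum_sq_le_sq_sum (l : List ℕ) : (l.map (fun x => x ^ 2)).sum ≤ l.sum ^ 2 := by
  induction l with
  | nil => simp
  | cons a t ih =>
    simp only [List.map_cons, List.sum_cons]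
    nlinarith [Nat.zero_le (t.sum), Nat.zero_le a]

lemma cast_sum_sq (l : List ℕ) :
    (l.map (fun x => (x : ℤ) ^ 2)).sum = (((l.map (fun x => x ^ 2)).sum : ℕ) : ℤ) := by
  induction l with
  | nil => simp
  | cons a t ih => simp_all

/-- Goursat's bound: if `μ¹, …, μᵏ` are partitions of `n ≥ 2`, each with at
least two parts (largest part at most `n−1`), satisfying the rigidity condition
`(k−2)·n² + 2 = Σ_s Σ_i (μᵢˢ)²`, then `k ≤ n + 1`. -/
theorem stmt_2 (n k : ℕ) (hn : 2 ≤ n) (hk : 1 ≤ k) (μ : Fin k → List ℕ)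
    (hsorted : ∀ s, (μ s).Pairwise (· ≥ ·))
    (hpos : ∀ s, ∀ x ∈ μ s, 1 ≤ x)
    (hsum : ∀ s, (μ s).sum = n)
    (htwo : ∀ s, (μ s).head! ≤ n - 1)
    (hrigid : ((k : ℤ) - 2) * (n : ℤ) ^ 2 + 2 =
      ∑ s : Fin k, (((μ s).map (fun x => (x : ℤ) ^ 2)).sum)) :
    k ≤ n + 1 := by
  have hbound : ∀ s : Fin k,
      (((μ s).map (fun x => (x : ℤ) ^ 2)).sum) ≤ (n : ℤ) ^ 2 - 2 * n + 2 := by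
    intro s
    obtain ⟨a, t, hat⟩ : ∃ a t, μ s = a :: t := by
      cases h : μ s with
      | nil => exfalso; have := hsum s; rw [h] at this; simp at this; omega
      | cons a t => exact ⟨a, t, rfl⟩
    have hs := hsum s
    have h2 := htwo s
    rw [hat] at hs h2 ⊢
    simp only [List.head!] at h2
    have ha1 : 1 ≤ a := hpos s a (by rw [hat]; exact List.mem_cons_self)
    have htne : t ≠ [] := by
      rintro rfl
      simp at hs
      omega
    have htsum1 : 1 ≤ t.sum := by
      obtain ⟨b, u, rfl⟩ := List.exists_cons_of_ne_nil htne
      have hb : 1 ≤ b := hpos s b (by rw [hat]; simp)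
      simp only [List.sum_cons]
      omega
    have hsq : (t.map (fun x => x ^ 2)).sum ≤ t.sum ^ 2 := sum_sq_le_sq_sum t
    rw [cast_sum_sq]
    have hsum' : a + t.sum = n := by simpa using hs
    have hnat : ((a :: t).map (fun x => x ^ 2)).sum + 2 * n ≤ n ^ 2 + 2 := by
      simp only [List.map_cons, List.sum_cons]
      nlinarith
    have hcast := (Nat.cast_le (α := ℤ)).mpr hnat
    push_cast at hcast ⊢
    linarith
  have hsumle : ((k : ℤ) - 2) * (n : ℤ) ^ 2 + 2 ≤ k * ((n : ℤ) ^ 2 - 2 * n + 2) := by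
    rw [hrigid]
    calc ∑ s : Fin k, (((μ s).map (fun x => (x : ℤ) ^ 2)).sum)
        ≤ ∑ _s : Fin k, ((n : ℤ) ^ 2 - 2 * n + 2) :=
          Finset.sum_le_sum (fun s _ => hbound s)
      _ = k * ((n : ℤ) ^ 2 - 2 * n + 2) := by simp [Finset.sum_const]
  have hnz : (2 : ℤ) ≤ n := by exact_mod_cast hn
  have : (k : ℤ) ≤ n + 1 := by nlinarith
  exact_mod_cast this
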